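/- On M = ℝ² with the symmetries s_{(a,ℓ)}(a′,ℓ′) = (2a − a′, 2cosh(a − a′)ℓ − ℓ′), for every triple of points x, y, z ∈ M the equation s_x(s_y(s_z(t))) = t has exactly one solution t ∈ M. (This is the assertion of Section 8.3 that the triple-point map Φ is globally defined on this symmetric space, so Weinstein's function S_can is everywhere defined on M × M × M.) -/
import Mathlib

/-- The symmetry `s_{(a,ℓ)}(a',ℓ') = (2a - a', 2cosh(a - a')ℓ - ℓ')`. -/
noncomputable def symmPoincare (x y : ℝ × ℝ) : ℝ × ℝ :=
  (2 * x.1 - y.1, 2 * Real.cosh (x.1 - y.1) * x.2 - y.2)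

/-- for every triple of points `x, y, z`, the equation
`s_x(s_y(s_z(t))) = t` has exactly one solution `t`. -/
theorem triple_point_equation_unique_solution :
    ∀ x y z : ℝ × ℝ, ∃! t : ℝ × ℝ,
      symmPoincare x (symmPoincare y (symmPoincare z t)) = t := by
  intro ⟨a, x2⟩ ⟨b, y2⟩ ⟨c, z2⟩
  refine ⟨(a - b + c,
    Real.cosh (b - c) * x2 - Real.cosh (a - c) * y2 + Real.cosh (a - b) * z2), ?_, ?_⟩
  · simp only [symmPoincare, Prod.mk.injEq]
    constructor
    · ring
    · have h1 : a - (2 * b - (2 * c - (a - b + c))) = -(b - c) := by ring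
      have h2 : b - (2 * c - (a - b + c)) = a - c := by ring
      have h3 : c - (a - b + c) = -(a - b) := by ring
      rw [h1, h2, h3, Real.cosh_neg, Real.cosh_neg]
      ring
  · rintro ⟨t1, t2⟩ h
    simp only [symmPoincare, Prod.mk.injEq] at h
    obtain ⟨h1, h2⟩ := h
    have ht1 : t1 = a - b + c := by linarith
    subst ht1
    have e1 : a - (2 * b - (2 * c - (a - b + c))) = -(b - c) := by ring
    have e2 : b - (2 * c - (a - b + c)) = a - c := by ring
    have e3 : c - (a - b + c) = -(a - b) := by ring
    rw [e1, e2, e3, Real.cosh_neg, Real.cosh_neg] at h2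
    simp only [Prod.mk.injEq, true_and]
    linarith
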